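/- Let d ≥ 1, let Q(t) = a_1 t^{α_1} + … + a_d t^{α_d} with real coefficients and distinct integer exponents 2 ≤ α_1 < … < α_d = n, and let λ = 2^{1/n} and Γ₀ = 2^{10·d!}. Suppose that for some index j₂ and some l ∈ ℤ we have |α_{j₂}(α_{j₂}−1) a_{j₂}| λ^{α_{j₂} l} ≥ 2^{Γ₀} |α_{j'}(α_{j'}−1) a_{j'}| λ^{α_{j'} l} for every j' ≠ j₂. Then for every t with λ^{l−2} ≤ |t| ≤ λ^{l+1}, the second derivative satisfies |Q''(t)| ≥ |a_{j₂}| |t|^{α_{j₂}−2}. -/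

import Mathlib

set_option maxHeartbeats 800000


open Real

/-- **The dominating monomial of `Q''` controls the size of `Q''` from below.**
Let `d ≥ 1`, `Q(t) = ∑ j, a j * t ^ (α j)` with real coefficients and distinct integer
exponents `2 ≤ α 1 < … < α d = n`, `λ = 2^{1/n}`, `Γ₀ = 2^{10·d!}`.  If for some index
`j₂` and some `l ∈ ℤ` we have
`|α j₂ (α j₂ − 1) a j₂| λ^{α j₂ l} ≥ 2^{Γ₀} |α j' (α j' − 1) a j'| λ^{α j' l}` for every
`j' ≠ j₂`, then for every `t` with `λ^{l−2} ≤ |t| ≤ λ^{l+1}` the second derivative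
satisfies `|Q''(t)| ≥ |a j₂| |t|^{α j₂ − 2}`. -/
theorem dominating_monomial_second_derivative_lower_bound
    (d : ℕ) (hd : 1 ≤ d) (n : ℕ)
    (a : Fin d → ℝ) (α : Fin d → ℕ)
    (hmono : StrictMono α) (h2 : ∀ j, 2 ≤ α j)
    (hlast : α ⟨d - 1, by omega⟩ = n)
    (lam : ℝ) (hlam : lam = (2 : ℝ) ^ ((n : ℝ)⁻¹))
    (Γ₀ : ℕ) (hΓ₀ : Γ₀ = 2 ^ (10 * Nat.factorial d))
    (j₂ : Fin d) (l : ℤ)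
    (hdom : ∀ j' : Fin d, j' ≠ j₂ →
      (2 : ℝ) ^ Γ₀ * (|(α j' : ℝ) * ((α j' : ℝ) - 1) * a j'| * lam ^ ((α j' : ℤ) * l))
        ≤ |(α j₂ : ℝ) * ((α j₂ : ℝ) - 1) * a j₂| * lam ^ ((α j₂ : ℤ) * l)) :
    ∀ t : ℝ, lam ^ (l - 2) ≤ |t| → |t| ≤ lam ^ (l + 1) →
      |a j₂| * |t| ^ (α j₂ - 2)
        ≤ |iteratedDeriv 2 (fun s : ℝ => ∑ j, a j * s ^ α j) t| := by
  intro t ht1 ht2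
  -- basic facts about n and lam
  have hn2 : 2 ≤ n := hlast ▸ h2 _
  have hlam1 : 1 < lam := by
    rw [hlam]
    refine (Real.one_lt_rpow_iff_of_pos two_pos).mpr (Or.inl ⟨one_lt_two, ?_⟩)
    positivity
  have hlam0 : (0:ℝ) < lam := lt_trans one_pos hlam1
  have hlamn : lam ^ (n : ℕ) = 2 := by
    rw [hlam, ← Real.rpow_natCast ((2:ℝ) ^ ((n:ℝ)⁻¹)) n, ← Real.rpow_mul (by norm_num),
      inv_mul_cancel₀ (by positivity), Real.rpow_one]
  have hαle : ∀ j : Fin d, α j ≤ n := by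
    intro j
    have hj : j ≤ (⟨d - 1, by omega⟩ : Fin d) := by
      have := j.isLt; exact Fin.mk_le_mk.mpr (by omega) |>.trans_eq rfl
    calc α j ≤ α ⟨d - 1, by omega⟩ := hmono.monotone hj
      _ = n := hlast
  -- the second derivative
  set f : ℝ → ℝ := fun s => ∑ j, a j * s ^ α j with hf
  have hD1 : deriv f = fun x : ℝ => ∑ j, a j * (α j : ℝ) * x ^ (α j - 1) := by
    funext x
    rw [hf, deriv_fun_sum (fun j _ => (differentiableAt_pow _).const_mul _)]
    refine Finset.sum_congr rfl fun j _ => ?_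
    rw [deriv_const_mul _ (differentiableAt_pow _), deriv_pow_field]
    ring
  have hD2 : iteratedDeriv 2 f t
      = ∑ j, (α j : ℝ) * ((α j : ℝ) - 1) * a j * t ^ (α j - 2) := by
    rw [iteratedDeriv_succ, iteratedDeriv_one, hD1]
    rw [deriv_fun_sum (fun j _ => ((differentiableAt_pow _).const_mul _))]
    refine Finset.sum_congr rfl fun j _ => ?_
    rw [deriv_const_mul _ (differentiableAt_pow _), deriv_pow_field]
    have h1 : ((α j - 1 : ℕ) : ℝ) = (α j : ℝ) - 1 := by
      have := h2 j; push_cast [Nat.cast_sub (by omega : 1 ≤ α j)]; ring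
    have h2' : α j - 1 - 1 = α j - 2 := by omega
    rw [h1, h2']
    ring
  set c : Fin d → ℝ := fun j => |(α j : ℝ) * ((α j : ℝ) - 1) * a j| with hc
  set T : Fin d → ℝ := fun j => (α j : ℝ) * ((α j : ℝ) - 1) * a j * t ^ (α j - 2) with hT
  have habsT : ∀ j, |T j| = c j * |t| ^ (α j - 2) := by
    intro j; rw [hT, hc]; simp [abs_mul, abs_pow]
  -- bounds on |t|^m from lam powers
  have hA : ∀ j : Fin d, |t| ^ (α j - 2) ≤ lam ^ ((l + 1) * ((α j : ℤ) - 2)) := by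
    intro j
    have hcast : ((α j - 2 : ℕ) : ℤ) = (α j : ℤ) - 2 := by have := h2 j; omega
    calc |t| ^ (α j - 2) ≤ (lam ^ (l + 1)) ^ (α j - 2) :=
          pow_le_pow_left₀ (abs_nonneg t) ht2 _
      _ = lam ^ ((l + 1) * ((α j : ℤ) - 2)) := by
          rw [← zpow_natCast (lam ^ (l + 1)), ← zpow_mul, hcast]
  have hB : lam ^ ((l - 2) * ((α j₂ : ℤ) - 2)) ≤ |t| ^ (α j₂ - 2) := by
    have hcast : ((α j₂ - 2 : ℕ) : ℤ) = (α j₂ : ℤ) - 2 := by have := h2 j₂; omega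
    calc lam ^ ((l - 2) * ((α j₂ : ℤ) - 2)) = (lam ^ (l - 2)) ^ (α j₂ - 2) := by
          rw [← zpow_natCast (lam ^ (l - 2)), ← zpow_mul, hcast]
      _ ≤ |t| ^ (α j₂ - 2) :=
          pow_le_pow_left₀ (le_of_lt (zpow_pos hlam0 _)) ht1 _
  -- the key per-term bound
  have hX0 : (0:ℝ) ≤ c j₂ * |t| ^ (α j₂ - 2) := by positivity
  have hkey : ∀ j' : Fin d, j' ≠ j₂ →
      (2:ℝ) ^ Γ₀ * (c j' * |t| ^ (α j' - 2)) ≤ 8 * (c j₂ * |t| ^ (α j₂ - 2)) := by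
    intro j' hne
    have step1 : (2:ℝ) ^ Γ₀ * (c j' * |t| ^ (α j' - 2))
        ≤ (2:ℝ) ^ Γ₀ * (c j' * lam ^ ((l + 1) * ((α j' : ℤ) - 2))) := by
      have := hA j'
      have hc0 : (0:ℝ) ≤ c j' := abs_nonneg _
      have : c j' * |t| ^ (α j' - 2) ≤ c j' * lam ^ ((l + 1) * ((α j' : ℤ) - 2)) :=
        mul_le_mul_of_nonneg_left this hc0
      nlinarith [pow_pos (two_pos (α := ℝ)) Γ₀]
    have e1 : lam ^ ((l + 1) * ((α j' : ℤ) - 2))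
        = lam ^ ((α j' : ℤ) * l) * lam ^ ((α j' : ℤ) - 2 - 2 * l) := by
      rw [← zpow_add₀ (ne_of_gt hlam0)]; congr 1; ring
    have step2 : (2:ℝ) ^ Γ₀ * (c j' * lam ^ ((l + 1) * ((α j' : ℤ) - 2)))
        ≤ (c j₂ * lam ^ ((α j₂ : ℤ) * l)) * lam ^ ((α j' : ℤ) - 2 - 2 * l) := by
      rw [e1, ← mul_assoc, ← mul_assoc]
      exact mul_le_mul_of_nonneg_right (by rw [mul_assoc]; exact hdom j' hne)
        (le_of_lt (zpow_pos hlam0 _))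
    have e2 : (c j₂ * lam ^ ((α j₂ : ℤ) * l)) * lam ^ ((α j' : ℤ) - 2 - 2 * l)
        = c j₂ * (lam ^ ((l - 2) * ((α j₂ : ℤ) - 2))
            * lam ^ ((α j' : ℤ) + 2 * (α j₂ : ℤ) - 6)) := by
      rw [← zpow_add₀ (ne_of_gt hlam0), mul_assoc, ← zpow_add₀ (ne_of_gt hlam0)]
      congr 2; ring
    have hsmall : lam ^ ((α j' : ℤ) + 2 * (α j₂ : ℤ) - 6) ≤ 8 := by
      have hle : (α j' : ℤ) + 2 * (α j₂ : ℤ) - 6 ≤ 3 * (n : ℤ) := by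
        have := hαle j'; have := hαle j₂; omega
      have h8 : lam ^ (3 * (n : ℤ)) = 8 := by
        rw [show (3 * (n:ℤ)) = (n:ℤ) * 3 by ring, zpow_mul, zpow_natCast, hlamn]
        norm_num
      calc lam ^ ((α j' : ℤ) + 2 * (α j₂ : ℤ) - 6) ≤ lam ^ (3 * (n : ℤ)) :=
            zpow_le_zpow_right₀ (le_of_lt hlam1) hle
        _ = 8 := h8
    have step3 : c j₂ * (lam ^ ((l - 2) * ((α j₂ : ℤ) - 2))
            * lam ^ ((α j' : ℤ) + 2 * (α j₂ : ℤ) - 6))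
        ≤ 8 * (c j₂ * |t| ^ (α j₂ - 2)) := by
      have hc0 : (0:ℝ) ≤ c j₂ := abs_nonneg _
      have hz0 : (0:ℝ) < lam ^ ((l - 2) * ((α j₂ : ℤ) - 2)) := zpow_pos hlam0 _
      have hz1 : (0:ℝ) < lam ^ ((α j' : ℤ) + 2 * (α j₂ : ℤ) - 6) := zpow_pos hlam0 _
      nlinarith [hB, mul_le_mul_of_nonneg_left hB hc0]
    calc (2:ℝ) ^ Γ₀ * (c j' * |t| ^ (α j' - 2))
        ≤ (2:ℝ) ^ Γ₀ * (c j' * lam ^ ((l + 1) * ((α j' : ℤ) - 2))) := step1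
      _ ≤ (c j₂ * lam ^ ((α j₂ : ℤ) * l)) * lam ^ ((α j' : ℤ) - 2 - 2 * l) := step2
      _ = _ := e2
      _ ≤ 8 * (c j₂ * |t| ^ (α j₂ - 2)) := step3
  -- 16 * (d-1) ≤ 2^Γ₀
  have hnat : 16 * (d - 1) ≤ 2 ^ Γ₀ := by
    have hfac : d + 4 ≤ 10 * Nat.factorial d := by
      have h1 := Nat.self_le_factorial d
      omega
    have hdG : d + 4 ≤ Γ₀ := by
      calc d + 4 ≤ 2 ^ (d + 4) := le_of_lt (Nat.lt_two_pow_self (n := _))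
        _ ≤ 2 ^ (10 * Nat.factorial d) := Nat.pow_le_pow_right (by norm_num) hfac
        _ = Γ₀ := hΓ₀.symm
    calc 16 * (d - 1) ≤ 16 * d := by omega
      _ ≤ 2 ^ 4 * 2 ^ d := by
          have := Nat.lt_two_pow_self (n := d); nlinarith
      _ = 2 ^ (d + 4) := by rw [← pow_add]; ring_nf
      _ ≤ 2 ^ Γ₀ := Nat.pow_le_pow_right (by norm_num) hdG
  -- sum of the other terms is small
  have hrest : ∑ j ∈ Finset.univ.erase j₂, |T j|
      ≤ (1/2) * (c j₂ * |t| ^ (α j₂ - 2)) := by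
    have hbd : ∀ j ∈ Finset.univ.erase j₂, |T j|
        ≤ (8 / 2 ^ Γ₀) * (c j₂ * |t| ^ (α j₂ - 2)) := by
      intro j hj
      have hne : j ≠ j₂ := Finset.ne_of_mem_erase hj
      have := hkey j hne
      rw [habsT j]
      have h2pos : (0:ℝ) < 2 ^ Γ₀ := by positivity
      rw [div_mul_eq_mul_div, le_div_iff₀ h2pos]
      nlinarith
    have hcard : (Finset.univ.erase j₂).card = d - 1 := by
      rw [Finset.card_erase_of_mem (Finset.mem_univ _), Finset.card_univ, Fintype.card_fin]
    calc ∑ j ∈ Finset.univ.erase j₂, |T j|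
        ≤ (Finset.univ.erase j₂).card • ((8 / 2 ^ Γ₀) * (c j₂ * |t| ^ (α j₂ - 2))) :=
          Finset.sum_le_card_nsmul _ _ _ hbd
      _ = ((d - 1 : ℕ) : ℝ) * ((8 / 2 ^ Γ₀) * (c j₂ * |t| ^ (α j₂ - 2))) := by
          rw [hcard, nsmul_eq_mul]
      _ ≤ (1/2) * (c j₂ * |t| ^ (α j₂ - 2)) := by
          have h16 : (16:ℝ) * ((d - 1 : ℕ) : ℝ) ≤ 2 ^ Γ₀ := by
            have : ((16 * (d - 1) : ℕ) : ℝ) ≤ ((2 ^ Γ₀ : ℕ) : ℝ) := Nat.cast_le.mpr hnat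
            push_cast at this; linarith
          have h2pos : (0:ℝ) < 2 ^ Γ₀ := by positivity
          have hd0 : (0:ℝ) ≤ ((d - 1 : ℕ) : ℝ) := Nat.cast_nonneg _
          rw [div_mul_eq_mul_div, ← mul_div_assoc, mul_comm]
          rw [div_le_iff₀ h2pos]
          nlinarith
  -- put everything together
  have hsplit : ∑ j, T j = T j₂ + ∑ j ∈ Finset.univ.erase j₂, T j :=
    (Finset.add_sum_erase _ _ (Finset.mem_univ j₂)).symm
  have habs : c j₂ * |t| ^ (α j₂ - 2) - ∑ j ∈ Finset.univ.erase j₂, |T j|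
      ≤ |∑ j, T j| := by
    rw [hsplit]
    have h1 : |∑ j ∈ Finset.univ.erase j₂, T j| ≤ ∑ j ∈ Finset.univ.erase j₂, |T j| :=
      Finset.abs_sum_le_sum_abs _ _
    have h2' : |T j₂| - |∑ j ∈ Finset.univ.erase j₂, T j|
        ≤ |T j₂ + ∑ j ∈ Finset.univ.erase j₂, T j| := by
      have := abs_add_le (T j₂ + ∑ j ∈ Finset.univ.erase j₂, T j)
        (-(∑ j ∈ Finset.univ.erase j₂, T j))
      simp only [add_neg_cancel_right, abs_neg] at this
      linarith
    rw [habsT j₂] at h2'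
    linarith
  have hcbig : 2 * |a j₂| ≤ c j₂ := by
    have hα2 : (2:ℝ) ≤ (α j₂ : ℝ) := by exact_mod_cast h2 j₂
    have heq : c j₂ = ((α j₂ : ℝ) * ((α j₂ : ℝ) - 1)) * |a j₂| := by
      simp only [hc]
      rw [abs_mul, abs_of_nonneg (by nlinarith : (0:ℝ) ≤ (α j₂ : ℝ) * ((α j₂ : ℝ) - 1))]
    rw [heq]
    have hco : (2:ℝ) ≤ (α j₂ : ℝ) * ((α j₂ : ℝ) - 1) := by nlinarith
    exact mul_le_mul_of_nonneg_right hco (abs_nonneg _)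
  have hQ : iteratedDeriv 2 f t = ∑ j, T j := hD2
  rw [hQ]
  have hpow0 : (0:ℝ) ≤ |t| ^ (α j₂ - 2) := by positivity
  have h3 := mul_le_mul_of_nonneg_right hcbig hpow0
  rw [mul_assoc] at h3
  linarith [habs, hrest, h3]
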